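/- Let A be the d×d shift matrix (1's on the superdiagonal), C = (1 0 ⋯ 0) ∈ ℝ^{1×d}, b = col(1, b₂, …, b_d) ∈ ℝ^d, and K = Ab + λb with λ > 0. Write the first coordinate χ₁ and let χ₂ ∈ ℝ^{d-1} be the remaining coordinates, ζ = b̂χ₁ + χ₂ with b̂ = −col(b₂,…,b_d). Then under the linear change of coordinates (χ₁, χ₂) ↦ (χ₁, ζ), the matrix A − KC becomes block lower-triangular with the (1,1) entry −λ, the (1,2) block equal to the row ĉ = (1 0 ⋯ 0) (of length d−1), and the (2,2) block equal to the companion-type matrix F with first column −col(b₂,…,b_d) and identity shifted in the remaining columns; i.e., the ζ-dynamics matrix is F, independent of λ. -/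

import Mathlib

open Matrix Finset in
private lemma aux_row {m : ℕ} (x : ℝ) (i : Fin (m + 1)) (v : Fin (m + 1) → ℝ) :
    ∑ k, (if i = k then (1:ℝ) else if k = 0 then x else 0) * v k
      = v i + (if i = 0 then 0 else x * v 0) := by
  have : ∀ k : Fin (m+1),
      (if i = k then (1:ℝ) else if k = 0 then x else 0) * v k
        = (if k = i then v k else 0) + (if k = 0 then (if i = 0 then 0 else x * v k) else 0) := by
    intro k
    by_cases h1 : i = k
    · subst h1
      by_cases h0 : i = 0 <;> simp [h0]
    · have h1' : ¬ k = i := fun h => h1 h.symm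
      by_cases h2 : k = 0
      · have h3 : ¬ i = 0 := fun h => h1 (h.trans h2.symm)
        have h3' : ¬ (0 : Fin (m+1)) = i := fun h => h3 h.symm
        simp [h1, h1', h2, h3, h3']
      · simp [h1, h1', h2]
  rw [Finset.sum_congr rfl fun k _ => this k, Finset.sum_add_distrib,
    Finset.sum_ite_eq' _ i v, Finset.sum_ite_eq' _ (0 : Fin (m+1))]
  simp

open Matrix Finset in
private lemma aux_col {m : ℕ} (b : Fin (m + 1) → ℝ) (hb : b 0 = 1) (j : Fin (m + 1))
    (w : Fin (m + 1) → ℝ) :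
    ∑ l, w l * (if l = j then (1:ℝ) else if j = 0 then b l else 0)
      = if j = 0 then ∑ l, w l * b l else w j := by
  by_cases hj : j = 0
  · subst hj
    rw [if_pos rfl]
    refine Finset.sum_congr rfl fun l _ => ?_
    by_cases h : l = 0 <;> simp [h, hb]
  · rw [if_neg hj]
    have : ∀ l : Fin (m+1),
        w l * (if l = j then (1:ℝ) else if j = 0 then b l else 0)
          = (if l = j then w l else 0) := by
      intro l
      by_cases h : l = j <;> simp [h, hj]
    rw [Finset.sum_congr rfl fun l _ => this l, Finset.sum_ite_eq' _ j w]
    simp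

/-- with `K = Ab + λb`, the change of coordinates
`(χ₁, χ₂) ↦ (χ₁, ζ)`, `ζ = b̂χ₁ + χ₂`, transforms `A − KC` into the matrix whose
first row is `(−λ, 1, 0, …, 0)`, whose first column below the diagonal is zero,
and whose lower-right `(d−1)×(d−1)` block is the companion-type matrix `F`
(independent of `λ`). Here `d = n+1`. -/
theorem stmt_9 (n : ℕ) (b : Fin (n + 1) → ℝ) (hb : b 0 = 1) (lam : ℝ) (hlam : 0 < lam)
    -- shift matrix A and output row C (as a vector c)
    (A : Matrix (Fin (n + 1)) (Fin (n + 1)) ℝ)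
    (hA : A = Matrix.of fun i j : Fin (n + 1) => if (i : ℕ) + 1 = (j : ℕ) then 1 else 0)
    (c : Fin (n + 1) → ℝ) (hc : c = fun j => if j = 0 then 1 else 0)
    -- K = Ab + λb
    (K : Fin (n + 1) → ℝ) (hK : K = A.mulVec b + lam • b)
    -- the coordinate change ζ = b̂χ₁ + χ₂, b̂ = −(b₂,…,b_d)
    (T : Matrix (Fin (n + 1)) (Fin (n + 1)) ℝ)
    (hT : T = Matrix.of fun i j : Fin (n + 1) => if i = j then 1 else if j = 0 then -(b i) else 0)
    -- the companion-type matrix F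
    (F : Matrix (Fin n) (Fin n) ℝ)
    (hF : F = Matrix.of fun i j : Fin n =>
      if (j : ℕ) = 0 then -(b i.succ) else if (i : ℕ) + 1 = (j : ℕ) then 1 else 0)
    -- the transformed matrix
    (Mt : Matrix (Fin (n + 1)) (Fin (n + 1)) ℝ)
    (hMt : Mt = Matrix.of fun i j : Fin (n + 1) =>
      if hi : i = 0 then (if (j : ℕ) = 0 then -lam else if (j : ℕ) = 1 then 1 else 0)
      else if hj : j = 0 then 0 else F (i.pred hi) (j.pred hj)) :
    IsUnit T.det ∧ T * (A - Matrix.vecMulVec K c) * T⁻¹ = Mt := by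
  -- explicit inverse of T
  set Tinv : Matrix (Fin (n + 1)) (Fin (n + 1)) ℝ :=
    Matrix.of fun i j : Fin (n + 1) => if i = j then 1 else if j = 0 then b i else 0 with hTinv
  have hTT : T * Tinv = 1 := by
    ext i j
    rw [Matrix.mul_apply]
    simp only [hT, hTinv, Matrix.of_apply]
    rw [aux_row (-(b i)) i (fun k => if k = j then (1:ℝ) else if j = 0 then b k else 0)]
    rw [Matrix.one_apply]
    by_cases hij : i = j
    · subst hij
      by_cases hi : i = 0
      · simp [hi]
      · have hi' : ¬ (0 : Fin (n+1)) = i := fun h => hi h.symm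
        simp [hi, hi']
    · rw [if_neg hij]
      have hij' : ¬ j = i := fun h => hij h.symm
      by_cases hi : i = 0
      · have hj : ¬ j = 0 := fun h => hij (hi.trans h.symm)
        have hj' : ¬ (0 : Fin (n+1)) = j := fun h => hj h.symm
        simp [hi, hij, hj, hj']
      · by_cases hj : j = 0
        · subst hj
          simp only [if_neg hij, if_pos rfl, if_neg hi]
          simp [hi]
        · have hj' : ¬ (0 : Fin (n+1)) = j := fun h => hj h.symm
          simp [hij, hi, hj, hj']
  refine ⟨Matrix.isUnit_det_of_right_inverse hTT, ?_⟩
  rw [Matrix.inv_eq_right_inv hTT]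
  -- the matrix M := A - K cᵀ
  set M : Matrix (Fin (n + 1)) (Fin (n + 1)) ℝ := A - Matrix.vecMulVec K c with hM
  have hMe : ∀ i j, M i j = (if (i:ℕ) + 1 = (j:ℕ) then (1:ℝ) else 0)
      - K i * (if j = 0 then 1 else 0) := by
    intro i j
    simp [hM, hA, hc, Matrix.vecMulVec_apply]
  have hN : ∀ i l, (T * M) i l = M i l + (if i = 0 then 0 else -(b i) * M 0 l) := by
    intro i l
    rw [Matrix.mul_apply]
    simp only [hT, Matrix.of_apply]
    exact aux_row (-(b i)) i (fun k => M k l)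
  have hKe : ∀ i, K i = (∑ k : Fin (n+1), (if (i:ℕ) + 1 = (k:ℕ) then (1:ℝ) else 0) * b k)
      + lam * b i := by
    intro i
    rw [hK]
    simp only [Pi.add_apply, Pi.smul_apply, smul_eq_mul, Matrix.mulVec, dotProduct,
      hA, Matrix.of_apply]
  ext i j
  rw [Matrix.mul_apply]
  simp only [hTinv, Matrix.of_apply]
  rw [aux_col b hb j (fun l => (T * M) i l)]
  by_cases hj : j = 0
  · -- first column
    subst hj
    rw [if_pos rfl]
    by_cases hi : i = 0
    · subst hi
      have expand : ∀ l : Fin (n+1), (T * M) (0 : Fin (n+1)) l * b l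
          = (if ((0 : Fin (n+1)):ℕ) + 1 = (l:ℕ) then (1:ℝ) else 0) * b l
              - K 0 * ((if l = 0 then (1:ℝ) else 0) * b l) := by
        intro l
        rw [hN, hMe]
        rw [if_pos rfl]
        ring
      rw [Finset.sum_congr rfl fun l _ => expand l, Finset.sum_sub_distrib, ← Finset.mul_sum]
      have h1 : ∑ l : Fin (n+1), (if l = 0 then (1:ℝ) else 0) * b l = 1 := by
        have : ∀ l : Fin (n+1), (if l = 0 then (1:ℝ) else 0) * b l
            = if l = 0 then b l else 0 := by intro l; by_cases h : l = 0 <;> simp [h]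
        rw [Finset.sum_congr rfl fun l _ => this l, Finset.sum_ite_eq' _ (0:Fin (n+1)) b]
        simp [hb]
      rw [h1, hKe 0, hb]
      have hMt00 : Mt (0 : Fin (n+1)) (0 : Fin (n+1)) = -lam := by simp [hMt]
      rw [hMt00]
      ring1
    · have expand : ∀ l : Fin (n+1), (T * M) i l * b l
          = ((if (i:ℕ) + 1 = (l:ℕ) then (1:ℝ) else 0) * b l
              - K i * ((if l = 0 then (1:ℝ) else 0) * b l))
            + (-(b i)) * ((if ((0 : Fin (n+1)):ℕ) + 1 = (l:ℕ) then (1:ℝ) else 0) * b l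
              - K 0 * ((if l = 0 then (1:ℝ) else 0) * b l)) := by
        intro l
        rw [hN, hMe, hMe, if_neg hi]
        ring
      have h1 : ∑ l : Fin (n+1), (if l = 0 then (1:ℝ) else 0) * b l = 1 := by
        have : ∀ l : Fin (n+1), (if l = 0 then (1:ℝ) else 0) * b l
            = if l = 0 then b l else 0 := by intro l; by_cases h : l = 0 <;> simp [h]
        rw [Finset.sum_congr rfl fun l _ => this l, Finset.sum_ite_eq' _ (0:Fin (n+1)) b]
        simp [hb]
      rw [Finset.sum_congr rfl fun l _ => expand l, Finset.sum_add_distrib,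
        Finset.sum_sub_distrib, ← Finset.mul_sum, ← Finset.mul_sum,
        Finset.sum_sub_distrib, ← Finset.mul_sum, h1, hKe i, hKe 0, hb]
      have hMti0 : Mt i (0 : Fin (n+1)) = 0 := by simp [hMt, hi]
      rw [hMti0]
      ring1
  · -- other columns
    rw [if_neg hj, hN, hMe, hMe]
    have hj0 : ¬ ((j:ℕ) = 0) := fun h => hj (Fin.ext (by simp [h]))
    have hz0 : ((0 : Fin (n+1)) : ℕ) = 0 := by simp
    simp only [if_neg hj, mul_zero, sub_zero]
    by_cases hi : i = 0
    · subst hi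
      rw [if_pos rfl, add_zero]
      simp only [hMt, Matrix.of_apply, dif_pos rfl, if_neg hj0, hz0]
      split_ifs <;> first | rfl | (exfalso; omega)
    · rw [if_neg hi]
      simp only [hMt, Matrix.of_apply, dif_neg hi, dif_neg hj, hF, Fin.coe_pred,
        Fin.succ_pred, hz0]
      have hi0 : ¬ ((i:ℕ) = 0) := fun h => hi (Fin.ext (by simp [h]))
      split_ifs <;> first | ring1 | (exfalso; omega)
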